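/- Let I be an instance, Σ a finite FD set, and x : I → ℚ a half-integral feasible fractional solution, i.e., x_t ∈ {0, 1/2, 1} for every t ∈ I and x_s + x_t ≥ 1 whenever s, t ∈ I form a conflict. Suppose I is partitioned into k ≥ 1 classes P_1, …, P_k, each consistent with respect to Σ. Then there exists a consistent subset J ⊆ I with dist(J, I) ≤ (2 − 2/k) · Σ_{t ∈ I} x_t. In particular, if moreover Σ_{t ∈ I} x_t ≤ opt(I), then dist(J, I) ≤ (2 − 2/k) · opt(I). -/
import Mathlib


/-- A functional dependency `X → Y` is a pair of attribute sets; two tuples form a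
`φ`-conflict if they agree on every attribute of `X` but differ on some attribute of `Y`. -/
def IsPhiConflict {α V : Type*} (X Y : Finset α) (s t : α → V) : Prop :=
  (∀ a ∈ X, s a = t a) ∧ (∃ a ∈ Y, s a ≠ t a)

instance {α V : Type*} [DecidableEq V] (X Y : Finset α) (s t : α → V) :
    Decidable (IsPhiConflict X Y s t) := by
  unfold IsPhiConflict; infer_instance

/-- Two tuples form a conflict w.r.t. a finite FD set if they form a `φ`-conflict
for some FD `φ` of the set. -/
def IsConflict {α V : Type*} (FDs : Finset (Finset α × Finset α)) (s t : α → V) : Prop :=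
  ∃ fd ∈ FDs, IsPhiConflict fd.1 fd.2 s t

instance {α V : Type*} [DecidableEq V] (FDs : Finset (Finset α × Finset α)) (s t : α → V) :
    Decidable (IsConflict FDs s t) := by
  unfold IsConflict; infer_instance

/-- A set of tuples is consistent w.r.t. an FD set if no two of its tuples form a conflict. -/
def Consistent {α V : Type*} (FDs : Finset (Finset α × Finset α)) (J : Finset (α → V)) : Prop :=
  ∀ s ∈ J, ∀ t ∈ J, ¬ IsConflict FDs s t

/-- `opt FDs I` is the minimum of `dist(J,I) = |I| - |J|` over all consistent subsets `J ⊆ I`. -/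
noncomputable def opt {α V : Type*} (FDs : Finset (Finset α × Finset α))
    (I : Finset (α → V)) : ℕ :=
  sInf {d : ℕ | ∃ J ⊆ I, Consistent FDs J ∧ d = I.card - J.card}

/-- Rounding a half-integral feasible fractional solution `x` along a partition of `I`
into `k ≥ 1` consistent classes `P_1, …, P_k` yields a consistent subset `J ⊆ I` with
`dist(J, I) ≤ (2 − 2/k) · Σ_{t ∈ I} x_t`; in particular, if moreover
`Σ_{t ∈ I} x_t ≤ opt(I)`, then `dist(J, I) ≤ (2 − 2/k) · opt(I)`. -/
theorem stmt8 {α V : Type*} [DecidableEq V] (FDs : Finset (Finset α × Finset α))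
    (I : Finset (α → V)) (x : (α → V) → ℚ)
    (hx : ∀ t ∈ I, x t = 0 ∨ x t = 1 / 2 ∨ x t = 1)
    (hfeas : ∀ s ∈ I, ∀ t ∈ I, IsConflict FDs s t → 1 ≤ x s + x t)
    (k : ℕ) (hk : 1 ≤ k) (P : Fin k → Finset (α → V))
    (hPsub : ∀ i, P i ⊆ I)
    (hPcover : ∀ t ∈ I, ∃! i, t ∈ P i)
    (hPcons : ∀ i, Consistent FDs (P i)) :
    ∃ J ⊆ I, Consistent FDs J ∧
      ((I.card : ℚ) - J.card ≤ (2 - 2 / k) * ∑ t ∈ I, x t ∧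
        ((∑ t ∈ I, x t) ≤ (opt FDs I : ℚ) →
          (I.card : ℚ) - J.card ≤ (2 - 2 / k) * (opt FDs I : ℚ))) := by
  classical
  have hkQ : (1 : ℚ) ≤ (k : ℚ) := by exact_mod_cast hk
  have hkQ0 : (0 : ℚ) < (k : ℚ) := by linarith
  have hc0 : (0 : ℚ) ≤ 2 - 2 / k := by
    have : (2 : ℚ) / k ≤ 2 / 1 := by
      apply div_le_div_of_nonneg_left (by norm_num) (by norm_num) hkQ
    simp at this; linarith
  -- reduce to the first inequality
  suffices h : ∃ J ⊆ I, Consistent FDs J ∧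
      (I.card : ℚ) - J.card ≤ (2 - 2 / k) * ∑ t ∈ I, x t by
    obtain ⟨J, hJI, hJc, hJb⟩ := h
    refine ⟨J, hJI, hJc, hJb, fun hopt => hJb.trans ?_⟩
    exact mul_le_mul_of_nonneg_left hopt hc0
  rcases eq_or_lt_of_le hk with hk1 | hk2
  · -- k = 1 : I itself is consistent
    refine ⟨I, subset_rfl, ?_, ?_⟩
    · intro s hs t ht hc
      obtain ⟨i, hi, _⟩ := hPcover s hs
      obtain ⟨j, hj, _⟩ := hPcover t ht
      subst hk1
      have hij : i = j := Subsingleton.elim i j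
      exact hPcons j s (hij ▸ hi) t hj hc
    · have hsum : (0 : ℚ) ≤ ∑ t ∈ I, x t := by
        apply Finset.sum_nonneg
        intro t ht
        rcases hx t ht with h | h | h <;> rw [h] <;> norm_num
      have : (I.card : ℚ) - I.card = 0 := by ring
      rw [this]
      positivity
  · -- k ≥ 2
    have hkQ2 : (2 : ℚ) ≤ (k : ℚ) := by exact_mod_cast hk2
    set Z : Finset (α → V) := I.filter (fun t => x t = 0) with hZdef
    set H : Finset (α → V) := I.filter (fun t => x t = 1 / 2) with hHdef
    set O : Finset (α → V) := I.filter (fun t => x t = 1) with hOdef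
    have hZI : Z ⊆ I := Finset.filter_subset _ _
    have hHI : H ⊆ I := Finset.filter_subset _ _
    have hOI : O ⊆ I := Finset.filter_subset _ _
    have hmemZ : ∀ t ∈ Z, x t = 0 := fun t ht => (Finset.mem_filter.mp ht).2
    have hmemH : ∀ t ∈ H, x t = 1 / 2 := fun t ht => (Finset.mem_filter.mp ht).2
    have hmemO : ∀ t ∈ O, x t = 1 := fun t ht => (Finset.mem_filter.mp ht).2
    have hdZH : Disjoint Z H := by
      rw [Finset.disjoint_left]
      intro t htZ htH
      exact absurd ((hmemZ t htZ).symm.trans (hmemH t htH)) (by norm_num)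
    have hdZO : Disjoint Z O := by
      rw [Finset.disjoint_left]
      intro t htZ htO
      exact absurd ((hmemZ t htZ).symm.trans (hmemO t htO)) (by norm_num)
    have hdHO : Disjoint H O := by
      rw [Finset.disjoint_left]
      intro t htH htO
      exact absurd ((hmemH t htH).symm.trans (hmemO t htO)) (by norm_num)
    have hdZH_HO : Disjoint Z (H ∪ O) := Finset.disjoint_union_right.mpr ⟨hdZH, hdZO⟩
    have hunion : Z ∪ (H ∪ O) = I := by
      apply Finset.Subset.antisymm
      · exact Finset.union_subset hZI (Finset.union_subset hHI hOI)
      · intro t ht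
        rcases hx t ht with h | h | h
        · exact Finset.mem_union_left _ (Finset.mem_filter.mpr ⟨ht, h⟩)
        · exact Finset.mem_union_right _
            (Finset.mem_union_left _ (Finset.mem_filter.mpr ⟨ht, h⟩))
        · exact Finset.mem_union_right _
            (Finset.mem_union_right _ (Finset.mem_filter.mpr ⟨ht, h⟩))
    have hcard : I.card = Z.card + (H.card + O.card) := by
      rw [← hunion, Finset.card_union_of_disjoint hdZH_HO,
        Finset.card_union_of_disjoint hdHO]
    have hsumI : ∑ t ∈ I, x t = (H.card : ℚ) / 2 + O.card := by
      rw [← hunion, Finset.sum_union hdZH_HO, Finset.sum_union hdHO]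
      have h1 : ∑ t ∈ Z, x t = 0 := Finset.sum_eq_zero hmemZ
      have h2 : ∑ t ∈ H, x t = (H.card : ℚ) / 2 := by
        rw [Finset.sum_congr rfl hmemH, Finset.sum_const, nsmul_eq_mul]
        ring
      have h3 : ∑ t ∈ O, x t = (O.card : ℚ) := by
        rw [Finset.sum_congr rfl hmemO, Finset.sum_const, nsmul_eq_mul]
        ring
      rw [h1, h2, h3]; ring
    -- choose maximizing class
    have hne : (Finset.univ : Finset (Fin k)).Nonempty := by
      exact ⟨⟨0, hk⟩, Finset.mem_univ _⟩
    obtain ⟨i, -, hi⟩ := Finset.exists_max_image (Finset.univ : Finset (Fin k))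
      (fun j => (H ∩ P j).card) hne
    set m : ℕ := (H ∩ P i).card with hmdef
    have hHm : H.card ≤ k * m := by
      have hsub : H ⊆ Finset.univ.biUnion (fun j => H ∩ P j) := by
        intro t ht
        obtain ⟨j, hj, -⟩ := hPcover t (hHI ht)
        exact Finset.mem_biUnion.mpr ⟨j, Finset.mem_univ _,
          Finset.mem_inter.mpr ⟨ht, hj⟩⟩
      calc H.card ≤ (Finset.univ.biUnion (fun j => H ∩ P j)).card :=
            Finset.card_le_card hsub
        _ ≤ ∑ j : Fin k, (H ∩ P j).card := Finset.card_biUnion_le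
        _ ≤ ∑ _j : Fin k, m := Finset.sum_le_sum (fun j _ => hi j (Finset.mem_univ _))
        _ = k * m := by rw [Finset.sum_const, Finset.card_univ, Fintype.card_fin,
            smul_eq_mul]
    -- the rounded set
    refine ⟨Z ∪ (H ∩ P i), ?_, ?_, ?_⟩
    · exact Finset.union_subset hZI ((Finset.inter_subset_left).trans hHI)
    · -- consistency
      intro s hs t ht hc
      rcases Finset.mem_union.mp hs with hsZ | hsH
      · -- x s = 0, x t ≤ 1/2
        have hxs : x s = 0 := hmemZ s hsZ
        have hxt : x t ≤ 1 / 2 := by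
          rcases Finset.mem_union.mp ht with htZ | htH
          · rw [hmemZ t htZ]; norm_num
          · rw [hmemH t (Finset.mem_inter.mp htH).1]
        have hsI : s ∈ I := hZI hsZ
        have htI : t ∈ I := by
          rcases Finset.mem_union.mp ht with htZ | htH
          · exact hZI htZ
          · exact hHI (Finset.mem_inter.mp htH).1
        have := hfeas s hsI t htI hc
        rw [hxs] at this; linarith
      · rcases Finset.mem_union.mp ht with htZ | htH
        · have hxt : x t = 0 := hmemZ t htZ
          have hxs : x s = 1 / 2 := hmemH s (Finset.mem_inter.mp hsH).1
          have := hfeas s (hHI (Finset.mem_inter.mp hsH).1) t (hZI htZ) hc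
          rw [hxs, hxt] at this; linarith
        · exact hPcons i s (Finset.mem_inter.mp hsH).2 t (Finset.mem_inter.mp htH).2 hc
    · -- the bound
      have hJcard : (Z ∪ (H ∩ P i)).card = Z.card + m := by
        rw [Finset.card_union_of_disjoint]
        exact Finset.disjoint_of_subset_right (Finset.inter_subset_left) hdZH
      rw [hJcard, hsumI, hcard]
      push_cast
      have hmQ : (H.card : ℚ) ≤ (k : ℚ) * m := by exact_mod_cast hHm
      have hOQ : (0 : ℚ) ≤ (O.card : ℚ) := Nat.cast_nonneg _
      have hmQ0 : (0 : ℚ) ≤ (m : ℚ) := Nat.cast_nonneg _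
      have hd : (2 : ℚ) / k * k = 2 := div_mul_cancel₀ 2 (ne_of_gt hkQ0)
      have hd1 : (2 : ℚ) / k ≤ 1 := by
        rw [div_le_one hkQ0]; linarith
      have hd0 : (0 : ℚ) ≤ 2 / k := by positivity
      nlinarith [mul_le_mul_of_nonneg_left hmQ hd0, mul_nonneg (sub_nonneg.mpr hd1) hOQ]
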